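/- Let h be a nonnegative integrable function on [0,1] with h(1/2) ≠ 0, and let G : [ν, μ] → ℝ be nonnegative, integrable, and h-convex (G(γx + (1-γ)y) ≤ h(γ)G(x) + h(1-γ)G(y)). Then (1/(2h(1/2))) · G((ν+μ)/2) ≤ (1/(μ-ν)) ∫_ν^μ G(x) dx ≤ (G(ν) + G(μ)) · ∫_0^1 h(γ) dγ. -/

import Mathlib

open MeasureTheory intervalIntegral Set

theorem h_convex_HH
    (ν μ : ℝ) (hνμ : ν < μ)
    (h : ℝ → ℝ) (hh : ∀ γ ∈ Set.Icc (0:ℝ) 1, 0 ≤ h γ)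
    (hhint : IntervalIntegrable h MeasureTheory.volume 0 1)
    (hhalf : h (1/2) ≠ 0)
    (G : ℝ → ℝ)
    (hGnonneg : ∀ x ∈ Set.Icc ν μ, 0 ≤ G x)
    (hGint : IntervalIntegrable G MeasureTheory.volume ν μ)
    (hG : ∀ x ∈ Set.Icc ν μ, ∀ y ∈ Set.Icc ν μ, ∀ γ ∈ Set.Icc (0:ℝ) 1,
      G (γ * x + (1 - γ) * y) ≤ h γ * G x + h (1 - γ) * G y) :
    (1 / (2 * h (1/2))) * G ((ν + μ) / 2) ≤ (1 / (μ - ν)) * ∫ x in ν..μ, G x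
      ∧ (1 / (μ - ν)) * (∫ x in ν..μ, G x) ≤ (G ν + G μ) * ∫ γ in (0:ℝ)..1, h γ := by
  have hd : (0:ℝ) < μ - ν := sub_pos.2 hνμ
  have hdne : μ - ν ≠ 0 := ne_of_gt hd
  set F : ℝ → ℝ := fun γ => G ((μ - ν) * γ + ν) with hF
  -- integrability of F on [0,1]
  have hFint : IntervalIntegrable F volume 0 1 := by
    have h1 := (hGint.comp_add_right ν).comp_mul_left (c := μ - ν)
    have e1 : (ν - ν) / (μ - ν) = (0:ℝ) := by simp
    have e2 : (μ - ν) / (μ - ν) = (1:ℝ) := by field_simp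
    rw [e1, e2] at h1
    exact h1
  have hFsub : IntervalIntegrable (fun γ => F (1 - γ)) volume 0 1 := by
    have h1 := (hFint.comp_sub_left 1).symm
    simpa using h1
  -- membership lemma
  have hmem : ∀ γ ∈ Set.Icc (0:ℝ) 1, (μ - ν) * γ + ν ∈ Set.Icc ν μ := by
    intro γ hγ
    constructor
    · nlinarith [hγ.1, hγ.2]
    · nlinarith [hγ.1, hγ.2]
  have hmem' : ∀ γ ∈ Set.Icc (0:ℝ) 1, (1:ℝ) - γ ∈ Set.Icc (0:ℝ) 1 := by
    intro γ hγ; exact ⟨by linarith [hγ.2], by linarith [hγ.1]⟩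
  -- change of variables
  have key : ∫ γ in (0:ℝ)..1, F γ = (μ - ν)⁻¹ * ∫ x in ν..μ, G x := by
    have := intervalIntegral.integral_comp_mul_add (a:=0) (b:=1) G hdne ν
    simp only [mul_zero, zero_add, mul_one, smul_eq_mul] at this
    rw [hF, this]
    ring_nf
  have keysub : ∫ γ in (0:ℝ)..1, F (1 - γ) = ∫ γ in (0:ℝ)..1, F γ := by
    rw [intervalIntegral.integral_comp_sub_left F 1]
    norm_num
  have hsubint : ∫ γ in (0:ℝ)..1, h (1 - γ) = ∫ γ in (0:ℝ)..1, h γ := by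
    rw [intervalIntegral.integral_comp_sub_left h 1]
    norm_num
  have hhsubint : IntervalIntegrable (fun γ => h (1 - γ)) volume 0 1 := by
    simpa using (hhint.comp_sub_left 1).symm
  have hhalfpos : 0 < h (1/2) :=
    lt_of_le_of_ne (hh (1/2) (by norm_num)) (Ne.symm hhalf)
  constructor
  · -- left inequality
    have step : ∀ γ ∈ Set.Icc (0:ℝ) 1,
        G ((ν + μ) / 2) ≤ h (1/2) * (F γ + F (1 - γ)) := by
      intro γ hγ
      have hx := hmem γ hγ
      have hy := hmem (1 - γ) (hmem' γ hγ)
      have := hG _ hx _ hy (1/2) (by norm_num)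
      have harg : (1/2 : ℝ) * ((μ - ν) * γ + ν) + (1 - 1/2) * ((μ - ν) * (1 - γ) + ν)
          = (ν + μ) / 2 := by ring
      rw [harg] at this
      norm_num at this ⊢
      rw [hF]
      linarith [this]
    have hint : ∫ γ in (0:ℝ)..1, G ((ν + μ) / 2) ≤
        ∫ γ in (0:ℝ)..1, h (1/2) * (F γ + F (1 - γ)) := by
      apply intervalIntegral.integral_mono_on (by norm_num)
        (intervalIntegrable_const) (((hFint.add hFsub).const_mul _))
      exact step
    rw [intervalIntegral.integral_const] at hint
    rw [intervalIntegral.integral_const_mul, intervalIntegral.integral_add hFint hFsub,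
      key, keysub, key] at hint
    simp only [sub_zero, one_smul, smul_eq_mul, one_mul] at hint
    have hint2 : G ((ν + μ) / 2) ≤ 2 * h (1/2) * ((μ - ν)⁻¹ * ∫ x in ν..μ, G x) := by
      nlinarith [hint]
    rw [div_mul_eq_mul_div, div_le_iff₀ (by positivity : (0:ℝ) < 2 * h (1/2))]
    have e : (1 / (μ - ν) * ∫ x in ν..μ, G x) * (2 * h (1/2))
        = 2 * h (1/2) * ((μ - ν)⁻¹ * ∫ x in ν..μ, G x) := by
      rw [one_div]; ring
    rw [e]; linarith [hint2]
  · -- right inequality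
    have step : ∀ γ ∈ Set.Icc (0:ℝ) 1,
        F γ ≤ h γ * G μ + h (1 - γ) * G ν := by
      intro γ hγ
      have := hG μ ⟨le_of_lt hνμ, le_refl μ⟩ ν ⟨le_refl ν, le_of_lt hνμ⟩ γ hγ
      have harg : γ * μ + (1 - γ) * ν = (μ - ν) * γ + ν := by ring
      rw [harg] at this
      exact this
    have hint : ∫ γ in (0:ℝ)..1, F γ ≤
        ∫ γ in (0:ℝ)..1, (h γ * G μ + h (1 - γ) * G ν) := by
      apply intervalIntegral.integral_mono_on (by norm_num) hFint
        ((hhint.mul_const _).add (hhsubint.mul_const _))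
      exact step
    rw [intervalIntegral.integral_add (hhint.mul_const _) (hhsubint.mul_const _),
      intervalIntegral.integral_mul_const, intervalIntegral.integral_mul_const,
      hsubint, key] at hint
    rw [one_div]
    calc (μ - ν)⁻¹ * ∫ x in ν..μ, G x
        ≤ (∫ γ in (0:ℝ)..1, h γ) * G μ + (∫ γ in (0:ℝ)..1, h γ) * G ν := hint
      _ = (G ν + G μ) * ∫ γ in (0:ℝ)..1, h γ := by ring
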